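/- If X* (the dual of a Banach space X) has the Schur property, then X does not contain an isomorphic copy of ℓ¹. -/

import Mathlib

open Filter

/-- A normed space has the Schur property if every weakly convergent sequence is norm
convergent (to the same limit). -/
def SchurProperty (E : Type*) [NormedAddCommGroup E] [NormedSpace ℝ E] : Prop :=
  ∀ (x : ℕ → E) (x₀ : E),
    (∀ f : E →L[ℝ] ℝ, Tendsto (fun n => f (x n)) atTop (nhds (f x₀))) →
    Tendsto x atTop (nhds x₀)

instance : Fact ((1 : ENNReal) ≤ 1) := ⟨le_refl _⟩

lemma hb_ext {X : Type*} [NormedAddCommGroup X] [NormedSpace ℝ X]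
    (T : lp (fun _ : ℕ => ℝ) 1 →L[ℝ] X) {c : ℝ} (hc0 : 0 < c)
    (hc : ∀ v, c * ‖v‖ ≤ ‖T v‖) (N : ℕ) (t : ℕ → ℝ) (ht : ∀ k, |t k| ≤ 1) :
    ∃ g : X →L[ℝ] ℝ, ‖g‖ ≤ 1 / c ∧ ∀ k < N, g (T (lp.single 1 k 1)) = t k := by
  classical
  have hc0' : (0:ℝ) ≤ 1 / c := by positivity
  have hnorm : ∀ v : lp (fun _ : ℕ => ℝ) 1, ‖v‖ ≤ (1 / c) * ‖T v‖ := by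
    intro v
    rw [div_mul_eq_mul_div, one_mul, le_div_iff₀ hc0, mul_comm]
    exact hc v
  set T' : lp (fun _ : ℕ => ℝ) 1 →ₗ[ℝ] X := (T : lp (fun _ : ℕ => ℝ) 1 →ₗ[ℝ] X) with hT'
  have hinj : Function.Injective T' := by
    intro v w hvw
    have h1 : ‖v - w‖ ≤ (1/c) * ‖T (v - w)‖ := hnorm _
    have h2 : T (v - w) = 0 := by
      have : T' (v - w) = 0 := by rw [map_sub, hvw, sub_self]
      exact this
    rw [h2, norm_zero, mul_zero] at h1
    exact sub_eq_zero.mp (norm_eq_zero.mp (le_antisymm h1 (norm_nonneg _)))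
  have φbd : ∀ v : lp (fun _ : ℕ => ℝ) 1,
      ∑ k ∈ Finset.range N, |t k * v k| ≤ ‖v‖ := by
    intro v
    have hs : HasSum (fun i => ‖v i‖ ^ (1 : ENNReal).toReal) (‖v‖ ^ (1 : ENNReal).toReal) :=
      lp.hasSum_norm (by simp) v
    simp only [ENNReal.toReal_one, Real.rpow_one] at hs
    calc ∑ k ∈ Finset.range N, |t k * v k|
        ≤ ∑ k ∈ Finset.range N, ‖v k‖ := by
          refine Finset.sum_le_sum fun k _ => ?_
          rw [abs_mul, Real.norm_eq_abs]
          calc |t k| * |v k| ≤ 1 * |v k| := by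
                exact mul_le_mul_of_nonneg_right (ht k) (abs_nonneg _)
            _ = |v k| := one_mul _
      _ ≤ ‖v‖ := sum_le_hasSum _ (fun k _ => norm_nonneg _) hs
  -- linear functional on ℓ¹
  let φ : lp (fun _ : ℕ => ℝ) 1 →ₗ[ℝ] ℝ :=
    { toFun := fun v => ∑ k ∈ Finset.range N, t k * v k
      map_add' := by
        intro v w
        rw [← Finset.sum_add_distrib]
        refine Finset.sum_congr rfl fun k _ => ?_
        have : (↑(v + w) : ℕ → ℝ) k = v k + w k := by
          rw [lp.coeFn_add]; rfl
        rw [this]; ring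
      map_smul' := by
        intro r v
        show ∑ k ∈ Finset.range N, t k * (↑(r • v) : ℕ → ℝ) k
            = (RingHom.id ℝ) r • ∑ k ∈ Finset.range N, t k * v k
        simp only [RingHom.id_apply, smul_eq_mul, Finset.mul_sum]
        refine Finset.sum_congr rfl fun k _ => ?_
        have : (↑(r • v) : ℕ → ℝ) k = r * v k := by
          rw [lp.coeFn_smul]; rfl
        rw [this]; ring }
  let e := LinearEquiv.ofInjective T' hinj
  let f : LinearPMap (RingHom.id ℝ) X ℝ := ⟨LinearMap.range T', φ.comp e.symm.toLinearMap⟩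
  have hfN : ∀ x : f.domain, f x ≤ (fun x => (1/c) * ‖x‖) (x : X) := by
    intro x
    set v := e.symm x with hv
    have hx : (x : X) = T' v := by
      have := e.apply_symm_apply x
      rw [← this]
      rfl
    have hfx : f x = ∑ k ∈ Finset.range N, t k * v k := rfl
    rw [hfx]
    calc ∑ k ∈ Finset.range N, t k * v k
        ≤ ∑ k ∈ Finset.range N, |t k * v k| :=
          Finset.sum_le_sum fun k _ => le_abs_self _
      _ ≤ ‖v‖ := φbd v
      _ ≤ (1/c) * ‖T v‖ := hnorm v
      _ = (1/c) * ‖(x : X)‖ := by rw [hx]; rfl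
  obtain ⟨g, hg_eq, hg_le⟩ := exists_extension_of_le_sublinear f (fun x => (1/c) * ‖x‖)
    (fun r hr x => by
      show (1/c) * ‖r • x‖ = r * ((1/c) * ‖x‖)
      rw [norm_smul, Real.norm_eq_abs, abs_of_pos hr]; ring)
    (fun x y => by
      show (1/c) * ‖x + y‖ ≤ (1/c) * ‖x‖ + (1/c) * ‖y‖
      have := norm_add_le x y
      calc (1/c) * ‖x + y‖ ≤ (1/c) * (‖x‖ + ‖y‖) := by
            exact mul_le_mul_of_nonneg_left this hc0'
        _ = (1/c) * ‖x‖ + (1/c) * ‖y‖ := by ring)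
    hfN
  have habs : ∀ x, |g x| ≤ (1/c) * ‖x‖ := by
    intro x
    rw [abs_le]
    constructor
    · have := hg_le (-x)
      rw [map_neg, norm_neg] at this
      linarith
    · exact hg_le x
  let G : X →L[ℝ] ℝ := g.mkContinuous (1/c) (fun x => by
    rw [Real.norm_eq_abs]; exact habs x)
  refine ⟨G, g.mkContinuous_norm_le hc0' _, ?_⟩
  intro k hk
  have hmem : T (lp.single 1 k 1) ∈ LinearMap.range T' := ⟨lp.single 1 k 1, rfl⟩
  have h1 : G (T (lp.single 1 k 1)) = f ⟨_, hmem⟩ := hg_eq ⟨_, hmem⟩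
  rw [h1]
  have h2 : e.symm ⟨T (lp.single 1 k 1), hmem⟩ = lp.single 1 k 1 := by
    apply e.injective
    apply Subtype.ext
    rw [e.apply_symm_apply]
    have : (e (lp.single 1 k 1) : X) = T' (lp.single 1 k 1) := rfl
    rw [this]; rfl
  have h3 : f ⟨_, hmem⟩ = ∑ j ∈ Finset.range N, t j * (lp.single 1 k (1:ℝ) : ℕ → ℝ) j := by
    show φ (e.symm ⟨_, hmem⟩) = _
    rw [h2]
    rfl
  rw [h3]
  have h4 : ∀ j, (lp.single 1 k (1:ℝ) : ℕ → ℝ) j = if j = k then 1 else 0 := by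
    intro j
    by_cases hj : j = k
    · subst hj; rw [lp.single_apply_self]; simp
    · rw [lp.single_apply_ne _ _ _ hj]; simp [hj]
  calc ∑ j ∈ Finset.range N, t j * (lp.single 1 k (1:ℝ) : ℕ → ℝ) j
      = ∑ j ∈ Finset.range N, if j = k then t j else 0 := by
        refine Finset.sum_congr rfl fun j _ => ?_
        rw [h4 j]
        by_cases hj : j = k <;> simp [hj]
    _ = t k := by rw [Finset.sum_ite_eq' (Finset.range N) k t, if_pos (Finset.mem_range.mpr hk)]

section main
variable {X : Type*} [NormedAddCommGroup X] [NormedSpace ℝ X]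

set_option maxHeartbeats 1000000 in
theorem dual_schur_aux
    (X : Type*) [NormedAddCommGroup X] [NormedSpace ℝ X] [CompleteSpace X]
    (h : ∀ (x : ℕ → (X →L[ℝ] ℝ)) (x₀ : X →L[ℝ] ℝ),
      (∀ f : (X →L[ℝ] ℝ) →L[ℝ] ℝ, Tendsto (fun n => f (x n)) atTop (nhds (f x₀))) →
      Tendsto x atTop (nhds x₀)) :
    ¬ ∃ T : lp (fun _ : ℕ => ℝ) 1 →L[ℝ] X, ∃ c > 0, ∀ v, c * ‖v‖ ≤ ‖T v‖ := by
  classical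
  rintro ⟨T, c, hc0, hc⟩
  set D := X →L[ℝ] ℝ with hD
  set x_ : ℕ → X := fun k => T (lp.single 1 k 1) with hx_
  have hxk : ∀ k, ‖x_ k‖ ≤ ‖T‖ := by
    intro k
    have h1 : ‖(lp.single 1 k (1:ℝ) : lp (fun _ : ℕ => ℝ) 1)‖ = 1 := by
      have := lp.norm_single (p := 1) (E := fun _ : ℕ => ℝ) (by simp) k (1:ℝ)
      simpa using this
    calc ‖x_ k‖ ≤ ‖T‖ * ‖(lp.single 1 k (1:ℝ) : lp (fun _ : ℕ => ℝ) 1)‖ := T.le_opNorm _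
      _ = ‖T‖ := by rw [h1, mul_one]
  -- sign patterns
  set st : ∀ N : ℕ, (Fin N → Bool) → ℕ → ℝ :=
    fun N t k => if h : k < N then (if t ⟨k, h⟩ then 1 else -1) else 0 with hst
  have hstbd : ∀ N t k, |st N t k| ≤ 1 := by
    intro N t k
    simp only [hst]
    split
    · split <;> simp
    · simp
  choose S hS1 hS2 using fun N (t : Fin N → Bool) =>
    hb_ext T hc0 hc N (st N t) (hstbd N t)
  have hSval : ∀ N t k (hk : k < N), S N t (x_ k) = if t ⟨k, hk⟩ then 1 else -1 := by
    intro N t k hk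
    rw [hx_]
    simp only
    rw [hS2 N t k hk, hst]
    simp only [dif_pos hk]
  -- averages
  set A : ℕ → (D → ℝ) → ℝ :=
    fun N g => (2^N : ℝ)⁻¹ * ∑ t : Fin N → Bool, g (S N t) with hA
  have hcard : ∀ N, (Fintype.card (Fin N → Bool) : ℝ) = 2^N := by
    intro N; simp [Fintype.card_fun]
  have A_bd : ∀ (N : ℕ) (g : D → ℝ) (M : ℝ), (∀ f : D, ‖f‖ ≤ 1/c → |g f| ≤ M) →
      |A N g| ≤ M := by
    intro N g M hM
    have hM0 : 0 ≤ M := le_trans (abs_nonneg _) (hM 0 (by simp; positivity))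
    rw [hA]
    simp only
    rw [abs_mul, abs_inv, abs_pow, abs_two]
    have h1 : |∑ t : Fin N → Bool, g (S N t)| ≤ 2^N * M := by
      calc |∑ t : Fin N → Bool, g (S N t)| ≤ ∑ t : Fin N → Bool, |g (S N t)| :=
            Finset.abs_sum_le_sum_abs _ _
        _ ≤ ∑ _t : Fin N → Bool, M := Finset.sum_le_sum fun t _ => hM _ (hS1 N t)
        _ = 2^N * M := by rw [Finset.sum_const, Finset.card_univ]; rw [nsmul_eq_mul]; rw_mod_cast [hcard N]
    calc (2^N : ℝ)⁻¹ * |∑ t : Fin N → Bool, g (S N t)| ≤ (2^N : ℝ)⁻¹ * (2^N * M) := by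
          exact mul_le_mul_of_nonneg_left h1 (by positivity)
      _ = M := by field_simp

  have A_orth : ∀ (N j k : ℕ) (hj : j < N) (hk : k < N),
      A N (fun f => f (x_ j) * f (x_ k)) = if j = k then 1 else 0 := by
    intro N j k hj hk
    rw [hA]
    simp only
    by_cases hjk : j = k
    · subst hjk
      rw [if_pos rfl]
      have h1 : ∀ t : Fin N → Bool, S N t (x_ j) * S N t (x_ j) = 1 := by
        intro t
        rw [hSval N t j hj]
        by_cases h : t ⟨j, hj⟩ <;> simp [h]
      rw [Finset.sum_congr rfl (fun t _ => h1 t), Finset.sum_const, Finset.card_univ,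
        nsmul_eq_mul, mul_one]
      rw_mod_cast [hcard N]
      field_simp
    · rw [if_neg hjk]
      have h0 : ∑ t : Fin N → Bool, S N t (x_ j) * S N t (x_ k) = 0 := by
        apply Finset.sum_ninvolution (fun t => Function.update t ⟨j, hj⟩ (!(t ⟨j, hj⟩)))
        · intro t
          have hne : (⟨k, hk⟩ : Fin N) ≠ ⟨j, hj⟩ := by
            simp only [ne_eq, Fin.mk.injEq]
            exact fun hkj => hjk hkj.symm
          set u : Fin N → Bool := Function.update t ⟨j, hj⟩ (!(t ⟨j, hj⟩)) with hu
          have h1 : u ⟨j, hj⟩ = !(t ⟨j, hj⟩) := Function.update_self _ _ _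
          have h2 : u ⟨k, hk⟩ = t ⟨k, hk⟩ := Function.update_of_ne hne _ _
          rw [hSval N t j hj, hSval N t k hk, hSval N u j hj, hSval N u k hk, h1, h2]
          by_cases hb : t ⟨j, hj⟩ <;> by_cases hb' : t ⟨k, hk⟩ <;> simp [hb, hb'] <;> ring
        · intro t _
          intro heq
          have := congrFun heq ⟨j, hj⟩
          rw [Function.update_self] at this
          exact Bool.not_ne_self _ this
        · intro t; exact Finset.mem_univ _
        · intro t
          funext i
          by_cases hi : i = ⟨j, hj⟩
          · subst hi
            rw [Function.update_self, Function.update_self, Bool.not_not]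
          · rw [Function.update_of_ne hi, Function.update_of_ne hi]
      rw [h0, mul_zero]
  have A_sq_le : ∀ (N : ℕ) (x : X), ‖x‖ ≤ 1 →
      A N (fun f => (f x)^2) ≤ (1/c)^2 := by
    intro N x hx
    rw [hA]; simp only
    have h1 : ∀ t : Fin N → Bool, (S N t x)^2 ≤ (1/c)^2 := by
      intro t
      have h2 : |S N t x| ≤ 1/c := by
        calc |S N t x| ≤ ‖S N t‖ * ‖x‖ := (S N t).le_opNorm x
          _ ≤ (1/c) * 1 := mul_le_mul (hS1 N t) hx (norm_nonneg _) (by positivity)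
          _ = 1/c := mul_one _
      calc (S N t x)^2 = |S N t x|^2 := (sq_abs _).symm
        _ ≤ (1/c)^2 := by
            apply pow_le_pow_left₀ (abs_nonneg _) h2
    calc (2^N : ℝ)⁻¹ * ∑ t : Fin N → Bool, (S N t x)^2
        ≤ (2^N : ℝ)⁻¹ * ∑ _t : Fin N → Bool, (1/c)^2 := by
          refine mul_le_mul_of_nonneg_left (Finset.sum_le_sum fun t _ => h1 t) (by positivity)
      _ = (1/c)^2 := by
          rw [Finset.sum_const, Finset.card_univ, nsmul_eq_mul]
          rw_mod_cast [hcard N]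
          field_simp
  -- ultrafilter limit machinery
  set U : Ultrafilter ℕ := Ultrafilter.of atTop with hUdef
  have hU : (U : Filter ℕ) ≤ atTop := Ultrafilter.of_le _
  have hasL_ex : ∀ (g : D → ℝ) (M : ℝ), (∀ f : D, ‖f‖ ≤ 1/c → |g f| ≤ M) →
      ∃ L : ℝ, Tendsto (fun N => A N g) (U : Filter ℕ) (nhds L) ∧ |L| ≤ M := by
    intro g M hM
    have hM0 : 0 ≤ M := le_trans (abs_nonneg _) (hM 0 (by simp; positivity))
    have hmem : ∀ N, A N g ∈ Set.Icc (-M) M := by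
      intro N
      have := A_bd N g M hM
      rw [abs_le] at this
      exact this
    have hle : (Ultrafilter.map (fun N => A N g) U : Filter ℝ) ≤ Filter.principal (Set.Icc (-M) M) := by
      rw [Filter.le_principal_iff]
      exact Filter.mem_map.mpr (Filter.univ_mem' hmem)
    obtain ⟨L, hL, hL2⟩ := isCompact_Icc.ultrafilter_le_nhds (Ultrafilter.map (fun N => A N g) U) hle
    exact ⟨L, hL2, abs_le.mpr ⟨hL.1, hL.2⟩⟩

  have hasL_const : ∀ (g : D → ℝ) (d : ℝ) (N₀ : ℕ), (∀ N, N₀ ≤ N → A N g = d) →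
      Tendsto (fun N => A N g) (U : Filter ℕ) (nhds d) := by
    intro g d N₀ hg
    have h1 : Tendsto (fun N => A N g) atTop (nhds d) := by
      refine Tendsto.congr' ?_ (tendsto_const_nhds : Tendsto (fun _ : ℕ => d) atTop (nhds d))
      filter_upwards [Filter.eventually_ge_atTop N₀] with N hN
      exact (hg N hN).symm
    exact h1.mono_left hU
  have hprodbd : ∀ (k : ℕ) (x : X), ∀ f : D, ‖f‖ ≤ 1/c →
      |f x * f (x_ k)| ≤ ((1/c) * (1/c) * ‖x_ k‖) * ‖x‖ := by
    intro k x f hf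
    rw [abs_mul]
    calc |f x| * |f (x_ k)| ≤ (‖f‖ * ‖x‖) * (‖f‖ * ‖x_ k‖) := by
          exact mul_le_mul (f.le_opNorm x) (f.le_opNorm (x_ k)) (abs_nonneg _)
            (by positivity)
      _ ≤ ((1/c) * ‖x‖) * ((1/c) * ‖x_ k‖) := by
          have h1 : ‖f‖ * ‖x‖ ≤ (1/c) * ‖x‖ := mul_le_mul_of_nonneg_right hf (norm_nonneg _)
          have h2 : ‖f‖ * ‖x_ k‖ ≤ (1/c) * ‖x_ k‖ := mul_le_mul_of_nonneg_right hf (norm_nonneg _)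
          exact mul_le_mul h1 h2 (by positivity) (by positivity)
      _ = ((1/c) * (1/c) * ‖x_ k‖) * ‖x‖ := by ring
  choose gv hgvT hgvB using fun (k : ℕ) (x : X) =>
    hasL_ex (fun f => f x * f (x_ k)) (((1/c) * (1/c) * ‖x_ k‖) * ‖x‖) (hprodbd k x)
  have A_add : ∀ (N : ℕ) (g₁ g₂ : D → ℝ),
      A N (fun f => g₁ f + g₂ f) = A N g₁ + A N g₂ := by
    intro N g₁ g₂
    rw [hA]; simp only
    rw [Finset.sum_add_distrib]; ring
  have A_mul : ∀ (N : ℕ) (r : ℝ) (g : D → ℝ),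
      A N (fun f => r * g f) = r * A N g := by
    intro N r g
    rw [hA]; simp only
    rw [← Finset.mul_sum]; ring
  have gv_add : ∀ (k : ℕ) (x y : X), gv k (x + y) = gv k x + gv k y := by
    intro k x y
    have e1 : (fun f : D => f (x + y) * f (x_ k))
        = fun f : D => f x * f (x_ k) + f y * f (x_ k) := by
      funext f; rw [map_add]; ring
    have h2 : Tendsto (fun N => A N (fun f : D => f (x + y) * f (x_ k)))
        (U : Filter ℕ) (nhds (gv k x + gv k y)) := by
      rw [e1]
      exact Tendsto.congr (fun N => (A_add N (fun f : D => f x * f (x_ k)) (fun f : D => f y * f (x_ k))).symm) ((hgvT k x).add (hgvT k y))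
    exact tendsto_nhds_unique (hgvT k (x + y)) h2
  have gv_smul : ∀ (k : ℕ) (r : ℝ) (x : X), gv k (r • x) = r * gv k x := by
    intro k r x
    have e1 : (fun f : D => f (r • x) * f (x_ k))
        = fun f : D => r * (f x * f (x_ k)) := by
      funext f; rw [map_smul]; simp only [smul_eq_mul]; ring
    have h2 : Tendsto (fun N => A N (fun f : D => f (r • x) * f (x_ k)))
        (U : Filter ℕ) (nhds (r * gv k x)) := by
      rw [e1]
      exact Tendsto.congr (fun N => (A_mul N r (fun f : D => f x * f (x_ k))).symm) ((hgvT k x).const_mul r)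
    exact tendsto_nhds_unique (hgvT k (r • x)) h2
  set g_ : ℕ → D := fun k => LinearMap.mkContinuous
    { toFun := gv k, map_add' := gv_add k, map_smul' := by
        intro r x
        simp only [RingHom.id_apply, smul_eq_mul]
        exact gv_smul k r x }
    ((1/c) * (1/c) * ‖x_ k‖) (fun x => by rw [Real.norm_eq_abs]; exact hgvB k x) with hg_
  have g_apply : ∀ k x, g_ k x = gv k x := fun k x => rfl
  have hgk1 : ∀ k, gv k (x_ k) = 1 := by
    intro k
    refine tendsto_nhds_unique (hgvT k (x_ k)) (hasL_const (fun f : D => f (x_ k) * f (x_ k)) 1 (k+1) ?_)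
    intro N hN
    have hk : k < N := hN
    have := A_orth N k k hk hk
    rw [if_pos rfl] at this
    exact this

  have A_sum : ∀ (N : ℕ) (sf : Finset ℕ) (g : ℕ → D → ℝ),
      A N (fun f => ∑ j ∈ sf, g j f) = ∑ j ∈ sf, A N (g j) := by
    intro N sf g
    rw [hA]; simp only
    rw [Finset.sum_comm, Finset.mul_sum]
  have weaknull : ∀ φ : (X →L[ℝ] ℝ) →L[ℝ] ℝ, Tendsto (fun k => φ (g_ k)) atTop (nhds 0) := by
    intro φ
    set a : ℕ → ℝ := fun k => φ (g_ k) with ha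
    have sumbd : ∀ n : ℕ, ∑ k ∈ Finset.range n, a k ^ 2 ≤ (‖φ‖ * (1/c))^2 := by
      intro n
      set s := ∑ k ∈ Finset.range n, a k ^ 2 with hs
      have hs0 : 0 ≤ s := Finset.sum_nonneg fun k _ => sq_nonneg _
      set G : D := ∑ k ∈ Finset.range n, a k • g_ k with hG
      have hφG : φ G = s := by
        rw [hG, map_sum, hs]
        refine Finset.sum_congr rfl fun k _ => ?_
        rw [map_smul, smul_eq_mul, sq]
      have hGx : ∀ x : X, Tendsto
          (fun N => A N (fun f : D => f x * (∑ k ∈ Finset.range n, a k * f (x_ k))))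
          (U : Filter ℕ) (nhds (G x)) := by
        intro x
        have e1 : (fun f : D => f x * (∑ k ∈ Finset.range n, a k * f (x_ k)))
            = fun f : D => ∑ k ∈ Finset.range n, a k * (f x * f (x_ k)) := by
          funext f; rw [Finset.mul_sum]; exact Finset.sum_congr rfl fun k _ => by ring
        have e2 : ∀ N, A N (fun f : D => ∑ k ∈ Finset.range n, a k * (f x * f (x_ k)))
            = ∑ k ∈ Finset.range n, a k * A N (fun f : D => f x * f (x_ k)) := by
          intro N
          rw [A_sum N (Finset.range n) (fun k f => a k * (f x * f (x_ k)))]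
          exact Finset.sum_congr rfl fun k _ =>
            A_mul N (a k) (fun f : D => f x * f (x_ k))
        have e3 : G x = ∑ k ∈ Finset.range n, a k * gv k x := by
          rw [hG, ContinuousLinearMap.sum_apply]
          refine Finset.sum_congr rfl fun k _ => ?_
          rw [ContinuousLinearMap.smul_apply, smul_eq_mul, g_apply]
        rw [e1, e3]
        refine Tendsto.congr (fun N => (e2 N).symm) ?_
        exact tendsto_finset_sum _ fun k _ => (hgvT k x).const_mul (a k)
      have hH2 : Tendsto
          (fun N => A N (fun f : D => (∑ k ∈ Finset.range n, a k * f (x_ k))^2))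
          (U : Filter ℕ) (nhds s) := by
        refine hasL_const (fun f : D => (∑ k ∈ Finset.range n, a k * f (x_ k))^2) s n ?_
        intro N hN
        have e4 : (fun f : D => (∑ k ∈ Finset.range n, a k * f (x_ k))^2)
            = fun f : D => ∑ j ∈ Finset.range n, ∑ k ∈ Finset.range n,
                (a j * a k) * (f (x_ j) * f (x_ k)) := by
          funext f
          rw [sq, Finset.sum_mul_sum]
          exact Finset.sum_congr rfl fun j _ => Finset.sum_congr rfl fun k _ => by ring
        rw [e4]
        rw [A_sum N (Finset.range n) (fun j f => ∑ k ∈ Finset.range n,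
          (a j * a k) * (f (x_ j) * f (x_ k)))]
        rw [hs]
        refine Finset.sum_congr rfl fun j hj => ?_
        rw [A_sum N (Finset.range n) (fun k f => (a j * a k) * (f (x_ j) * f (x_ k)))]
        have hjN : j < N := lt_of_lt_of_le (Finset.mem_range.mp hj) hN
        have e5 : ∀ k ∈ Finset.range n,
            A N (fun f : D => (a j * a k) * (f (x_ j) * f (x_ k)))
            = if j = k then a j * a k else 0 := by
          intro k hk
          have hkN : k < N := lt_of_lt_of_le (Finset.mem_range.mp hk) hN
          rw [A_mul N (a j * a k) (fun f : D => f (x_ j) * f (x_ k)), A_orth N j k hjN hkN]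
          by_cases hjk : j = k <;> simp [hjk]
        rw [Finset.sum_congr rfl e5, Finset.sum_ite_eq (Finset.range n) j (fun k => a j * a k),
          if_pos hj, sq]
      have hGnorm : ∀ x : X, ‖x‖ ≤ 1 → |G x| ≤ (1/c) * Real.sqrt s := by
        intro x hx
        have hCS : ∀ N : ℕ,
            (A N (fun f : D => f x * (∑ k ∈ Finset.range n, a k * f (x_ k))))^2
            ≤ (1/c)^2 * A N (fun f : D => (∑ k ∈ Finset.range n, a k * f (x_ k))^2) := by
          intro N
          rw [hA]; simp only
          set u : (Fin N → Bool) → ℝ := fun t => S N t x with hu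
          set v : (Fin N → Bool) → ℝ := fun t => ∑ k ∈ Finset.range n, a k * S N t (x_ k) with hv
          have hcs := Finset.sum_mul_sq_le_sq_mul_sq Finset.univ u v
          have hu2 : ∑ t : Fin N → Bool, u t ^ 2 ≤ 2^N * (1/c)^2 := by
            calc ∑ t : Fin N → Bool, u t ^ 2 ≤ ∑ _t : Fin N → Bool, (1/c)^2 := by
                  refine Finset.sum_le_sum fun t _ => ?_
                  have h2' : |S N t x| ≤ 1/c := by
                    calc |S N t x| ≤ ‖S N t‖ * ‖x‖ := (S N t).le_opNorm x
                      _ ≤ (1/c) * 1 := mul_le_mul (hS1 N t) hx (norm_nonneg _) (by positivity)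
                      _ = 1/c := mul_one _
                  calc u t ^ 2 = |S N t x|^2 := by rw [hu]; rw [sq_abs]
                    _ ≤ (1/c)^2 := by apply pow_le_pow_left₀ (abs_nonneg _) h2'
              _ = 2^N * (1/c)^2 := by
                  rw [Finset.sum_const, Finset.card_univ, nsmul_eq_mul]
                  rw_mod_cast [hcard N]
          have hv2 : (0:ℝ) ≤ ∑ t : Fin N → Bool, v t ^ 2 :=
            Finset.sum_nonneg fun t _ => sq_nonneg _
          have hpow : (0:ℝ) < 2^N := by positivity
          calc ((2^N : ℝ)⁻¹ * ∑ t : Fin N → Bool, u t * v t)^2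
              = ((2^N : ℝ)⁻¹)^2 * (∑ t : Fin N → Bool, u t * v t)^2 := by ring
            _ ≤ ((2^N : ℝ)⁻¹)^2 * ((∑ t : Fin N → Bool, u t ^ 2)
                * (∑ t : Fin N → Bool, v t ^ 2)) := by
                exact mul_le_mul_of_nonneg_left hcs (by positivity)
            _ ≤ ((2^N : ℝ)⁻¹)^2 * ((2^N * (1/c)^2) * (∑ t : Fin N → Bool, v t ^ 2)) := by
                refine mul_le_mul_of_nonneg_left ?_ (by positivity)
                exact mul_le_mul_of_nonneg_right hu2 hv2
            _ = (1/c)^2 * ((2^N : ℝ)⁻¹ * ∑ t : Fin N → Bool, v t ^ 2) := by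
                field_simp
        have hsq : (G x)^2 ≤ (1/c)^2 * s := by
          have hL1 : Tendsto
              (fun N => (A N (fun f : D => f x * (∑ k ∈ Finset.range n, a k * f (x_ k))))^2)
              (U : Filter ℕ) (nhds ((G x)^2)) := (hGx x).pow 2
          have hL2 : Tendsto
              (fun N => (1/c)^2 * A N (fun f : D => (∑ k ∈ Finset.range n, a k * f (x_ k))^2))
              (U : Filter ℕ) (nhds ((1/c)^2 * s)) := hH2.const_mul _
          exact le_of_tendsto_of_tendsto' hL1 hL2 hCS
        have h6 : |G x| = Real.sqrt ((G x)^2) := (Real.sqrt_sq_eq_abs _).symm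
        rw [h6]
        calc Real.sqrt ((G x)^2) ≤ Real.sqrt ((1/c)^2 * s) := Real.sqrt_le_sqrt hsq
          _ = (1/c) * Real.sqrt s := by
              rw [Real.sqrt_mul (by positivity), Real.sqrt_sq (by positivity)]
      have hGnorm' : ‖G‖ ≤ (1/c) * Real.sqrt s := by
        refine ContinuousLinearMap.opNorm_le_bound _ (by positivity) fun x => ?_
        by_cases hx0 : x = 0
        · simp [hx0]
        · have hxn : (0:ℝ) < ‖x‖ := norm_pos_iff.mpr hx0
          have := hGnorm (‖x‖⁻¹ • x) (by
            rw [norm_smul, norm_inv, norm_norm, inv_mul_cancel₀ hxn.ne'])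
          rw [map_smul, smul_eq_mul, abs_mul, abs_inv, abs_norm] at this
          rw [Real.norm_eq_abs]
          calc |G x| = ‖x‖ * (‖x‖⁻¹ * |G x|) := by field_simp
            _ ≤ ‖x‖ * ((1/c) * Real.sqrt s) := by
                exact mul_le_mul_of_nonneg_left this (norm_nonneg x)
            _ = (1/c) * Real.sqrt s * ‖x‖ := by ring
      have hfinal : s ≤ ‖φ‖ * ((1/c) * Real.sqrt s) := by
        calc s = φ G := hφG.symm
          _ ≤ |φ G| := le_abs_self _
          _ ≤ ‖φ‖ * ‖G‖ := by
              have := φ.le_opNorm G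
              rwa [Real.norm_eq_abs] at this
          _ ≤ ‖φ‖ * ((1/c) * Real.sqrt s) :=
              mul_le_mul_of_nonneg_left hGnorm' (ContinuousLinearMap.opNorm_nonneg φ)
      nlinarith [Real.sq_sqrt hs0, Real.sqrt_nonneg s, norm_nonneg φ,
        mul_nonneg (norm_nonneg φ) (Real.sqrt_nonneg s), hc0]
    have hsum : Summable (fun k => a k ^ 2) :=
      summable_of_sum_range_le (fun k => sq_nonneg _) sumbd
    have h2 : Tendsto (fun k => a k ^ 2) atTop (nhds 0) := hsum.tendsto_atTop_zero
    have habs : Tendsto (fun k => |a k|) atTop (nhds 0) := by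
      have h3 : Tendsto (fun k => Real.sqrt (a k ^ 2)) atTop (nhds (Real.sqrt 0)) :=
        (Real.continuous_sqrt.tendsto 0).comp h2
      rw [Real.sqrt_zero] at h3
      refine Tendsto.congr (fun k => ?_) h3
      rw [Real.sqrt_sq_eq_abs]
    have hneg : Tendsto (fun k => -|a k|) atTop (nhds 0) := by
      have := habs.neg; rwa [neg_zero] at this
    exact tendsto_of_tendsto_of_tendsto_of_le_of_le hneg habs
      (fun k => neg_abs_le _) (fun k => le_abs_self _)
  have hschur := h g_ 0 (fun φ => by
    rw [map_zero]
    exact weaknull φ)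
  have hnorm0 : Tendsto (fun k => ‖g_ k‖) atTop (nhds 0) := by
    have := hschur.norm
    rwa [norm_zero] at this
  have hTn : (0:ℝ) < ‖T‖ + 1 := by positivity
  obtain ⟨K, hK⟩ := (Metric.tendsto_atTop.mp hnorm0) ((‖T‖+1)⁻¹) (by positivity)
  have h1 := hK K le_rfl
  rw [Real.dist_eq, sub_zero, abs_norm] at h1
  have h4 : ‖g_ K‖ * (‖T‖ + 1) < 1 := by
    have := mul_lt_mul_of_pos_right h1 hTn
    rwa [inv_mul_cancel₀ hTn.ne'] at this
  have h3 : (1:ℝ) ≤ ‖g_ K‖ * ‖x_ K‖ := by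
    have h5 : |g_ K (x_ K)| ≤ ‖g_ K‖ * ‖x_ K‖ := by
      have := (g_ K).le_opNorm (x_ K)
      rwa [Real.norm_eq_abs] at this
    rw [g_apply, hgk1 K] at h5
    simpa using h5
  have h6 : ‖g_ K‖ * ‖x_ K‖ ≤ ‖g_ K‖ * ‖T‖ :=
    mul_le_mul_of_nonneg_left (hxk K) (norm_nonneg _)
  nlinarith [norm_nonneg (g_ K)]



end main


/-- If the dual `X*` of a Banach space `X` has the Schur property, then `X` contains no
isomorphic copy of `ℓ¹`. -/
theorem not_contains_l1_of_dual_schur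
    (X : Type*) [NormedAddCommGroup X] [NormedSpace ℝ X] [CompleteSpace X]
    (h : SchurProperty (X →L[ℝ] ℝ)) :
    ¬ ∃ T : lp (fun _ : ℕ => ℝ) 1 →L[ℝ] X, ∃ c > 0, ∀ v, c * ‖v‖ ≤ ‖T v‖ := by
  exact dual_schur_aux X h
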